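/- For m = 0 and the dihedral group I_2(N), the Macdonald-type identity holds: (Π_{k=0}^{N-1} ∂_{α_k}) (Π_{k=0}^{N-1} (α_k, x)) = N!/2^{N−1}, where α_k = (−sin(πk/N), cos(πk/N)). -/

import Mathlib

open Finset

open Complex in
private noncomputable def zc (y : ℝ × ℝ) : ℂ := (y.1 : ℂ) + (y.2 : ℂ) * Complex.I

section helpers
open Complex Polynomial

lemma keyDeriv (c : ℂ) (n : ℕ) (y v : ℝ × ℝ) :
    fderiv ℝ (fun y => (c * zc y ^ n).im) y v = (c * n * zc y ^ (n - 1) * zc v).im := by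
  set L := (ContinuousLinearMap.fst ℝ ℝ ℝ).smulRight (1 : ℂ)
        + (ContinuousLinearMap.snd ℝ ℝ ℝ).smulRight Complex.I with hLdef
  have hL : HasFDerivAt zc L y := by
    have h := L.hasFDerivAt (x := y)
    have e : (⇑L) = zc := by
      funext p
      simp [hLdef, zc, Complex.real_smul]
    rwa [e] at h
  have h1 : HasDerivAt (fun w : ℂ => c * w ^ n) (c * (n * zc y ^ (n - 1))) (zc y) :=
    (hasDerivAt_pow n _).const_mul c
  have h3 := h1.comp_hasFDerivAt y hL
  have h4 := (Complex.imCLM.hasFDerivAt (x := (c * zc y ^ n))).comp y h3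
  have h5 : (fun y => (c * zc y ^ n).im) = Complex.imCLM ∘ (fun w : ℂ => c * w ^ n) ∘ zc := rfl
  rw [h5, h4.fderiv]
  simp [zc, Complex.real_smul, L]
  ring_nf

lemma factor_eq (θ : ℝ) (y : ℝ × ℝ) :
    ((-Real.sin θ * y.1 + Real.cos θ * y.2 : ℝ) : ℂ)
      = Complex.exp ((-θ : ℝ) * Complex.I)
        * (zc y - Complex.exp ((2*θ : ℝ) * Complex.I) * (starRingEnd ℂ) (zc y)) / (2 * Complex.I) := by
  have hconj : (starRingEnd ℂ) (zc y) = (y.1 : ℂ) - (y.2 : ℂ) * Complex.I := by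
    simp [zc, Complex.conj_ofReal]; ring
  have h2 : Complex.exp ((2*θ : ℝ) * Complex.I) = Complex.exp ((θ:ℝ) * Complex.I) ^ 2 := by
    rw [← Complex.exp_nat_mul]; congr 1; push_cast; ring
  rw [hconj, h2, Complex.exp_mul_I, Complex.exp_mul_I,
    eq_div_iff (by simp : (2 * Complex.I : ℂ) ≠ 0)]
  simp only [zc, Complex.ofReal_neg, Complex.ofReal_add, Complex.ofReal_mul, Complex.cos_neg,
    Complex.sin_neg, Complex.ofReal_cos, Complex.ofReal_sin]
  have hsc : Complex.sin θ ^ 2 + Complex.cos θ ^ 2 = 1 := Complex.sin_sq_add_cos_sq _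
  linear_combination ((Complex.cos θ + Complex.sin θ * Complex.I) * ((y.1:ℂ) - (y.2:ℂ) * Complex.I)) * hsc
    - (Complex.sin θ ^ 2 * ((Complex.cos θ + Complex.sin θ * Complex.I) * ((y.1:ℂ) - (y.2:ℂ) * Complex.I))) * Complex.I_sq

lemma prod_sub_pow_root {N : ℕ} (hN : 0 < N) {ζ : ℂ} (hζ : IsPrimitiveRoot ζ N) (t : ℂ) :
    ∏ k ∈ range N, (t - ζ ^ k) = t ^ N - 1 := by
  have h := Polynomial.X_pow_sub_one_eq_prod hN hζ
  have h2 := congrArg (Polynomial.eval t) h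
  simp only [eval_sub, eval_pow, eval_X, eval_one, eval_prod, eval_C] at h2
  have hval : (Polynomial.nthRootsFinset N (1 : ℂ)).val = (Multiset.range N).map (ζ ^ ·) := by
    rw [Polynomial.nthRootsFinset]
    rw [Multiset.toFinset_val, Multiset.dedup_eq_self.2 (IsPrimitiveRoot.nthRoots_one_nodup hζ)]
    simpa using hζ.nthRoots_eq (one_pow N)
  rw [h2]
  conv_rhs => rw [Finset.prod_eq_multiset_prod, hval, Multiset.map_map]
  rfl

lemma prod_sub_pow_mul {N : ℕ} (hN : 0 < N) {ζ : ℂ} (hζ : IsPrimitiveRoot ζ N) (z w : ℂ) :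
    ∏ k ∈ range N, (z - ζ ^ k * w) = z ^ N - w ^ N := by
  rcases eq_or_ne w 0 with rfl | hw
  · simp [zero_pow hN.ne', Finset.prod_const]
  · have : ∀ k ∈ range N, z - ζ ^ k * w = w * (z / w - ζ ^ k) := by
      intro k _; field_simp
    rw [Finset.prod_congr rfl this, Finset.prod_mul_distrib, Finset.prod_const,
      Finset.card_range, prod_sub_pow_root hN hζ]
    rw [div_pow, mul_sub, mul_one, mul_div_assoc', mul_div_cancel_left₀ _ (pow_ne_zero N hw)]

lemma sum_theta (N : ℕ) (hN : 1 ≤ N) :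
    ∑ k ∈ range N, (Real.pi * k / N) = Real.pi * (N - 1 : ℕ) / 2 := by
  have hN0 : (N : ℝ) ≠ 0 := Nat.cast_ne_zero.2 (by omega)
  have h2 : (∑ k ∈ range N, (k : ℝ)) = (N : ℝ) * ((N - 1 : ℕ) : ℝ) / 2 := by
    have h3 := Finset.sum_range_id_mul_two N
    have h4 := congrArg (Nat.cast : ℕ → ℝ) h3
    push_cast at h4
    linarith
  calc ∑ k ∈ range N, (Real.pi * k / N) = ∑ k ∈ range N, (Real.pi / N) * k := by
        refine Finset.sum_congr rfl fun k _ => by ring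
    _ = (Real.pi / N) * ∑ k ∈ range N, (k : ℝ) := by rw [Finset.mul_sum]
    _ = Real.pi * (N - 1 : ℕ) / 2 := by rw [h2]; field_simp



lemma scalar_eq (N : ℕ) (hN : 1 ≤ N) :
    Complex.exp ((-(Real.pi * (N - 1 : ℕ) / 2) : ℝ) * Complex.I) * (2 * Complex.I)
        / (2 * Complex.I) ^ N
      = (((-1 : ℝ) ^ (N + 1) / 2 ^ (N - 1) : ℝ) : ℂ) := by
  obtain ⟨M, rfl⟩ : ∃ M, N = M + 1 := ⟨N - 1, by omega⟩
  simp only [Nat.add_sub_cancel]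
  have e1 : Complex.exp ((Real.pi / 2 : ℝ) * Complex.I) = Complex.I := by
    rw [Complex.exp_mul_I]; simp
  have e2 : Complex.I ^ (M + 1)
      = Complex.exp ((((M + 1) * (Real.pi / 2)) : ℝ) * Complex.I) := by
    conv_lhs => rw [← e1]
    rw [← Complex.exp_nat_mul]; congr 1; push_cast; ring
  have e3 : Complex.exp ((-(Real.pi * (M : ℝ) / 2) : ℝ) * Complex.I) * Complex.I
      = Complex.exp ((-(Real.pi * (M : ℝ) / 2) + Real.pi / 2 : ℝ) * Complex.I) := by
    rw [Complex.ofReal_add, add_mul, Complex.exp_add, e1]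
  have e4 : Complex.exp ((Real.pi * (M : ℝ) : ℝ) * Complex.I) = (-1 : ℂ) ^ M := by
    rw [← Complex.exp_pi_mul_I, ← Complex.exp_nat_mul]; congr 1; push_cast; ring
  have e5 : Complex.exp ((-(Real.pi * (M : ℝ) / 2) + Real.pi / 2 : ℝ) * Complex.I)
      / Complex.exp ((((M + 1) * (Real.pi / 2)) : ℝ) * Complex.I) = (-1 : ℂ) ^ M := by
    rw [← Complex.exp_sub]
    have h : ((-(Real.pi * (M : ℝ) / 2) + Real.pi / 2 : ℝ) : ℂ) * Complex.I
        - (((M + 1) * (Real.pi / 2) : ℝ) : ℂ) * Complex.I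
        = -(((Real.pi * (M : ℝ) : ℝ) : ℂ) * Complex.I) := by push_cast; ring
    rw [h, Complex.exp_neg, e4, ← inv_pow]
    norm_num
  have hIne : (Complex.I : ℂ) ^ (M + 1) ≠ 0 := pow_ne_zero _ Complex.I_ne_zero
  have h2ne : ((2 : ℂ)) ^ (M + 1) ≠ 0 := pow_ne_zero _ two_ne_zero
  calc Complex.exp ((-(Real.pi * (M : ℝ) / 2) : ℝ) * Complex.I) * (2 * Complex.I)
        / (2 * Complex.I) ^ (M + 1)
      = (2 : ℂ) / 2 ^ (M + 1)
        * (Complex.exp ((-(Real.pi * (M : ℝ) / 2) : ℝ) * Complex.I) * Complex.I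
            / Complex.I ^ (M + 1)) := by
        rw [mul_pow]; field_simp
    _ = (2 : ℂ) / 2 ^ (M + 1) * (-1 : ℂ) ^ M := by rw [e2, e3, e5]
    _ = (((-1 : ℝ) ^ (M + 1 + 1) / 2 ^ M : ℝ) : ℂ) := by
        push_cast
        rw [pow_succ, pow_succ, pow_succ]
        field_simp

lemma prodA (N : ℕ) (hN : 1 ≤ N) (y : ℝ × ℝ) :
    (∏ k ∈ range N, ((-Real.sin (Real.pi * k / N)) * y.1 + Real.cos (Real.pi * k / N) * y.2))
      = ((-1 : ℝ) ^ (N + 1) / 2 ^ (N - 1)) * ((zc y) ^ N).im := by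
  have hN0 : N ≠ 0 := by omega
  set ζ : ℂ := Complex.exp (2 * Real.pi * Complex.I / N) with hζdef
  have hζ : IsPrimitiveRoot ζ N := Complex.isPrimitiveRoot_exp N hN0
  rw [← Complex.ofReal_inj, Complex.ofReal_prod]
  have step1 : ∀ k ∈ range N,
      (((-Real.sin (Real.pi * k / N)) * y.1 + Real.cos (Real.pi * k / N) * y.2 : ℝ) : ℂ)
        = Complex.exp ((-(Real.pi * k / N) : ℝ) * Complex.I)
            * (zc y - ζ ^ k * (starRingEnd ℂ) (zc y)) / (2 * Complex.I) := by
    intro k hk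
    rw [factor_eq (Real.pi * k / N) y]
    have hz : Complex.exp ((2 * (Real.pi * k / N) : ℝ) * Complex.I) = ζ ^ k := by
      rw [hζdef, ← Complex.exp_nat_mul]
      congr 1
      have : (N : ℂ) ≠ 0 := Nat.cast_ne_zero.2 hN0
      push_cast
      field_simp
    rw [hz]
  rw [Finset.prod_congr rfl step1, Finset.prod_div_distrib, Finset.prod_mul_distrib,
    Finset.prod_const, Finset.card_range, prod_sub_pow_mul (by omega) hζ,
    ← Complex.exp_sum]
  have hsum : (∑ k ∈ range N, ((-(Real.pi * k / N) : ℝ) : ℂ) * Complex.I)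
      = ((-(Real.pi * (N - 1 : ℕ) / 2) : ℝ) : ℂ) * Complex.I := by
    rw [← Finset.sum_mul]
    congr 1
    rw [← Complex.ofReal_sum]
    congr 1
    rw [Finset.sum_neg_distrib, sum_theta N hN]
  rw [hsum, show (starRingEnd ℂ) (zc y) ^ N = (starRingEnd ℂ) ((zc y) ^ N) from
    (map_pow _ _ _).symm, Complex.sub_conj]
  have : Complex.exp ((-(Real.pi * (N - 1 : ℕ) / 2) : ℝ) * Complex.I)
      * ((2 * ((zc y) ^ N).im : ℝ) * Complex.I) / (2 * Complex.I) ^ N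
      = (Complex.exp ((-(Real.pi * (N - 1 : ℕ) / 2) : ℝ) * Complex.I) * (2 * Complex.I)
          / (2 * Complex.I) ^ N) * (((zc y) ^ N).im : ℝ) := by
    push_cast
    ring
  rw [this, scalar_eq N hN]
  push_cast
  ring

end helpers

open Complex in
lemma flat_singleton (f : ℕ → ℝ) (l : List ℕ) : (l.flatMap fun a => [f a]) = List.map f l := by
  induction l with
  | nil => rfl
  | cons a l ih => simp [List.flatMap_cons, ih]

theorem stmt10 (N : ℕ) (hN : 1 ≤ N) :
    ∀ x : ℝ × ℝ,
      ((List.range N).foldr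
        (fun k g => fun y : ℝ × ℝ =>
          fderiv ℝ g y (-Real.sin (Real.pi * k / N), Real.cos (Real.pi * k / N)))
        (fun y : ℝ × ℝ =>
          ∏ k ∈ range N,
            ((-Real.sin (Real.pi * k / N)) * y.1 + Real.cos (Real.pi * k / N) * y.2))) x
      = (Nat.factorial N : ℝ) / 2^(N-1) := by
  intro x
  set C : ℝ := (-1 : ℝ) ^ (N + 1) / 2 ^ (N - 1) with hC
  set d : ℕ → ℂ := fun j => ∏ k ∈ Finset.Ico j N,
    (((k : ℂ) + 1) * (Complex.I * Complex.exp ((Real.pi * k / N : ℝ) * Complex.I))) with hd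
  have hzc : ∀ θ : ℝ, zc (-Real.sin θ, Real.cos θ)
      = Complex.I * Complex.exp ((θ : ℝ) * Complex.I) := by
    intro θ
    rw [Complex.exp_mul_I]
    simp only [zc, Complex.ofReal_neg, Complex.ofReal_cos, Complex.ofReal_sin]
    linear_combination (-(Complex.sin (θ : ℂ))) * Complex.I_sq
  have key : ∀ n, n ≤ N →
      (((List.range' (N - n) n).map (Nat.cast : ℕ → ℝ)).foldr
        (fun (k : ℝ) g => fun y : ℝ × ℝ =>
          fderiv ℝ g y (-Real.sin (Real.pi * k / N), Real.cos (Real.pi * k / N)))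
        (fun y : ℝ × ℝ =>
          ∏ k ∈ range N,
            ((-Real.sin (Real.pi * k / N)) * y.1 + Real.cos (Real.pi * k / N) * y.2)))
      = fun y => (((C : ℂ) * d (N - n)) * zc y ^ (N - n)).im := by
    intro n
    induction n with
    | zero =>
      intro _
      simp only [Nat.sub_zero, List.range'_zero, List.map_nil, List.foldr_nil]
      funext y
      rw [prodA N hN y]
      have hdN : d N = 1 := by simp [hd]
      rw [hdN, mul_one, Complex.im_ofReal_mul]
    | succ n ih =>
      intro hn1
      have hn : n ≤ N := by omega
      have hsucc : N - (n + 1) + 1 = N - n := by omega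
      have hjlt : N - (n + 1) < N := by omega
      rw [List.range'_succ, List.map_cons, List.foldr_cons, hsucc, ih hn]
      funext y
      rw [keyDeriv]
      congr 1
      rw [hzc (Real.pi * ((N - (n+1) : ℕ) : ℝ) / N)]
      have hdj : d (N - (n + 1)) = (((N - (n+1) : ℕ) : ℂ) + 1)
          * (Complex.I * Complex.exp ((Real.pi * ((N - (n+1) : ℕ) : ℝ) / N : ℝ) * Complex.I))
          * d (N - n) := by
        simp only [hd]
        rw [Finset.prod_eq_prod_Ico_succ_bot hjlt, hsucc]
      rw [hdj]
      have hcast : ((N - (n+1) : ℕ) : ℂ) + 1 = ((N - n : ℕ) : ℂ) := by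
        push_cast [← hsucc]
        ring
      rw [hcast]
      have hsub1 : N - n - 1 = N - (n + 1) := by omega
      rw [hsub1]
      ring
  have hkey := key N le_rfl
  rw [Nat.sub_self] at hkey
  have hlist : (do let a ← List.range N; pure ((a : ℕ) : ℝ)) 
      = (List.range' 0 N).map (Nat.cast : ℕ → ℝ) := by
    rw [← List.range_eq_range']
    exact flat_singleton _ _
  rw [show ((List.range N : List ℕ) : List ℝ) = (List.range' 0 N).map (Nat.cast : ℕ → ℝ) from hlist]
  rw [hkey]
  simp only [pow_zero, mul_one]
  obtain ⟨M, hM⟩ : ∃ M, N = M + 1 := ⟨N - 1, by omega⟩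
  have hfac : (∏ k ∈ range N, ((k : ℂ) + 1)) = (N.factorial : ℂ) := by
    rw [← Finset.prod_range_add_one_eq_factorial]
    push_cast
    rfl
  have hd0 : d 0 = (N.factorial : ℂ)
      * (Complex.I ^ N * Complex.exp ((Real.pi * ((N - 1 : ℕ) : ℝ) / 2 : ℝ) * Complex.I)) := by
    simp only [hd]
    rw [← Finset.range_eq_Ico, Finset.prod_mul_distrib, Finset.prod_mul_distrib, hfac,
      Finset.prod_const, Finset.card_range, ← Complex.exp_sum]
    rw [← Finset.sum_mul, ← Complex.ofReal_sum, sum_theta N hN]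
  have hIe : Complex.I ^ N * Complex.exp ((Real.pi * ((N - 1 : ℕ) : ℝ) / 2 : ℝ) * Complex.I)
      = (-1 : ℂ) ^ (N + 1) * Complex.I := by
    subst hM
    simp only [Nat.add_sub_cancel]
    have e1 : Complex.exp ((Real.pi / 2 : ℝ) * Complex.I) = Complex.I := by
      rw [Complex.exp_mul_I]; simp
    have e2 : Complex.I ^ (M + 1) = Complex.exp ((((M + 1) * (Real.pi / 2)) : ℝ) * Complex.I) := by
      conv_lhs => rw [← e1]
      rw [← Complex.exp_nat_mul]; congr 1; push_cast; ring
    have e4 : Complex.exp ((Real.pi * (M : ℝ) : ℝ) * Complex.I) = (-1 : ℂ) ^ M := by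
      rw [← Complex.exp_pi_mul_I, ← Complex.exp_nat_mul]; congr 1; push_cast; ring
    rw [e2, ← Complex.exp_add]
    have h5 : (((M + 1) * (Real.pi / 2) : ℝ) : ℂ) * Complex.I
        + ((Real.pi * ((M : ℕ) : ℝ) / 2 : ℝ) : ℂ) * Complex.I
        = ((Real.pi * (M : ℝ) : ℝ) : ℂ) * Complex.I + ((Real.pi / 2 : ℝ) : ℂ) * Complex.I := by
      push_cast; ring
    rw [h5, Complex.exp_add, e4, e1, pow_succ, pow_succ]
    ring
  rw [hd0, hIe]
  have h6 : ((C : ℂ) * ((N.factorial : ℂ) * ((-1 : ℂ) ^ (N + 1) * Complex.I)))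
      = ((C * N.factorial * (-1 : ℝ) ^ (N + 1) : ℝ) : ℂ) * Complex.I := by
    push_cast; ring
  rw [h6]
  have h7 : ∀ r : ℝ, ((r : ℂ) * Complex.I).im = r := by intro r; simp
  rw [h7, hC]
  have hsq : ((-1 : ℝ) ^ (N + 1)) * ((-1 : ℝ) ^ (N + 1)) = 1 := by
    rw [← pow_add]
    exact Even.neg_one_pow ⟨N + 1, by ring⟩
  field_simp
  linear_combination hsq
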